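/- Symmetry reduction lemma: For a parameterised interleaved interpreted system T(n) and a formula φ(J) of ACTL*K_{-X} over agent indices J with |J| = k ≤ n, T(n) satisfies the conjunction of φ(C) over all k-tuples C of distinct agents if and only if T(n) satisfies the single instantiation φ({1,…,k}). -/

import Mathlib

-- State and path formulas of ACTL*K without next, in negation normal form,
-- with atoms and epistemic modalities indexed by agents in `A`.
mutual
inductive SForm (AP A : Type) : Type where
  | atom : AP → A → SForm AP A
  | natom : AP → A → SForm AP A
  | sand : SForm AP A → SForm AP A → SForm AP A
  | sor : SForm AP A → SForm AP A → SForm AP A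
  | know : A → SForm AP A → SForm AP A
  | aall : PForm AP A → SForm AP A

inductive PForm (AP A : Type) : Type where
  | ofState : SForm AP A → PForm AP A
  | pand : PForm AP A → PForm AP A → PForm AP A
  | por : PForm AP A → PForm AP A → PForm AP A
  | puntil : PForm AP A → PForm AP A → PForm AP A
  | prelease : PForm AP A → PForm AP A → PForm AP A
end

-- Renaming of agent indices in a formula.
mutual
def renameS {AP A B : Type} (f : A → B) : SForm AP A → SForm AP B
  | .atom p i => .atom p (f i)
  | .natom p i => .natom p (f i)
  | .sand φ ψ => .sand (renameS f φ) (renameS f ψ)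
  | .sor φ ψ => .sor (renameS f φ) (renameS f ψ)
  | .know i φ => .know (f i) (renameS f φ)
  | .aall φ => .aall (renameP f φ)

def renameP {AP A B : Type} (f : A → B) : PForm AP A → PForm AP B
  | .ofState φ => .ofState (renameS f φ)
  | .pand φ ψ => .pand (renameP f φ) (renameP f ψ)
  | .por φ ψ => .por (renameP f φ) (renameP f ψ)
  | .puntil φ ψ => .puntil (renameP f φ) (renameP f ψ)
  | .prelease φ ψ => .prelease (renameP f φ) (renameP f ψ)
end

/-- A model: global states, a transition relation, an initial state,
epistemic indistinguishability relations, and an indexed valuation. -/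
structure Model (AP A : Type) where
  G : Type
  R : G → G → Prop
  init : G
  eqv : A → G → G → Prop
  val : G → AP → A → Prop

def Model.ValidPath {AP A : Type} (M : Model AP A) (π : ℕ → M.G) : Prop :=
  ∀ j, M.R (π j) (π (j + 1))

def shiftPath {G : Type} (π : ℕ → G) (i : ℕ) : ℕ → G := fun j => π (i + j)

-- Satisfaction of state formulas at states and of path formulas on paths.
mutual
def ssat {AP A : Type} (M : Model AP A) : SForm AP A → M.G → Prop
  | .atom p i, g => M.val g p i
  | .natom p i, g => ¬ M.val g p i
  | .sand φ ψ, g => ssat M φ g ∧ ssat M ψ g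
  | .sor φ ψ, g => ssat M φ g ∨ ssat M ψ g
  | .know i φ, g => ∀ g', M.eqv i g g' → ssat M φ g'
  | .aall φ, g => ∀ π, M.ValidPath π → π 0 = g → psat M φ π

def psat {AP A : Type} (M : Model AP A) : PForm AP A → (ℕ → M.G) → Prop
  | .ofState φ, π => ssat M φ (π 0)
  | .pand φ ψ, π => psat M φ π ∧ psat M ψ π
  | .por φ ψ, π => psat M φ π ∨ psat M ψ π
  | .puntil φ ψ, π => ∃ i, psat M ψ (shiftPath π i) ∧ ∀ j < i, psat M φ (shiftPath π j)
  | .prelease φ ψ, π => ∀ i, (∀ j < i, ¬ psat M φ (shiftPath π j)) → psat M ψ (shiftPath π i)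
end

/-- A template agent: template states, initial state, synchronous and
asynchronous template actions (the silent action is treated separately),
protocol, deterministic evolution function, and labeling. -/
structure Template (AP : Type) where
  L : Type
  init : L
  SAct : Type
  AAct : Type
  protS : L → SAct → Prop
  protA : L → AAct → Prop
  tS : L → SAct → L
  tA : L → AAct → L
  lab : L → AP → Prop

/-- Global states of the instance `T(n)`: a template state per agent. -/
def GState {AP : Type} (T : Template AP) (n : ℕ) : Type := Fin n → T.L

/-- Concrete actions of `T(n)`: synchronous actions (shared by all agents),
asynchronous actions indexed by the unique agent performing them, and the
(joint) silent action. -/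
inductive CAct {AP : Type} (T : Template AP) (n : ℕ) : Type where
  | sync : T.SAct → CAct T n
  | async : T.AAct → Fin n → CAct T n
  | eps : CAct T n

/-- The global interleaved transition relation of `T(n)`: a synchronous
action is performed by all agents simultaneously, an asynchronous action by
exactly one agent (all others keep their state), and the silent action
leaves the global state unchanged. -/
def GTrans {AP : Type} (T : Template AP) (n : ℕ) :
    CAct T n → GState T n → GState T n → Prop
  | .sync s, g, g' => ∀ i, T.protS (g i) s ∧ g' i = T.tS (g i) s
  | .async b i, g, g' =>
      T.protA (g i) b ∧ g' i = T.tA (g i) b ∧ ∀ j, j ≠ i → g' j = g j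
  | .eps, g, g' => g' = g

/-- The initial global state of `T(n)`. -/
def GInit {AP : Type} (T : Template AP) (n : ℕ) : GState T n := fun _ => T.init

/-- Reachability from the initial state of `T(n)`. -/
def GReach {AP : Type} (T : Template AP) (n : ℕ) (g : GState T n) : Prop :=
  Relation.ReflTransGen (fun x y => ∃ a, GTrans T n a x y) (GInit T n) g

/-- The instance `T(n)` as a model: epistemic relations are given by equality
of the local component over the (reachable) global states, and atoms `p_i`
hold according to the template labeling of agent `i`'s local state. -/
def PIISModel {AP : Type} (T : Template AP) (n : ℕ) : Model AP (Fin n) where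
  G := GState T n
  R := fun g g' => ∃ a, GTrans T n a g g'
  init := GInit T n
  eqv := fun i g g' => GReach T n g' ∧ g i = g' i
  val := fun g p i => T.lab (g i) p

/-- `T(n) ⊨ φ`: satisfaction at the initial state. -/
def PIISsat {AP : Type} (T : Template AP) (n : ℕ) (φ : SForm AP (Fin n)) : Prop :=
  ssat (PIISModel T n) φ (PIISModel T n).init

section Aux
open Equiv

variable {AP : Type}

/-- Action of a permutation of agents on global states. -/
def mapG {AP : Type} (T : Template AP) (n : ℕ) (σ : Equiv.Perm (Fin n))
    (g : GState T n) : GState T n := fun i => g (σ⁻¹ i)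

def mapAct {AP : Type} (T : Template AP) (n : ℕ) (σ : Equiv.Perm (Fin n)) :
    CAct T n → CAct T n
  | .sync s => .sync s
  | .async b i => .async b (σ i)
  | .eps => .eps

lemma mapG_mapG {T : Template AP} {n : ℕ} (σ τ : Equiv.Perm (Fin n)) (g : GState T n) :
    mapG T n σ (mapG T n τ g) = mapG T n (σ * τ) g := by
  funext i; simp [mapG, Equiv.Perm.mul_apply]

lemma mapG_inv_mapG {T : Template AP} {n : ℕ} (σ : Equiv.Perm (Fin n)) (g : GState T n) :
    mapG T n σ⁻¹ (mapG T n σ g) = g := by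
  funext i; simp [mapG]

lemma mapG_mapG_inv {T : Template AP} {n : ℕ} (σ : Equiv.Perm (Fin n)) (g : GState T n) :
    mapG T n σ (mapG T n σ⁻¹ g) = g := by
  funext i; simp [mapG]

lemma gtrans_map {T : Template AP} {n : ℕ} (σ : Equiv.Perm (Fin n))
    {a : CAct T n} {g g' : GState T n} (h : GTrans T n a g g') :
    GTrans T n (mapAct T n σ a) (mapG T n σ g) (mapG T n σ g') := by
  cases a with
  | sync s =>
      intro i; exact h (σ⁻¹ i)
  | async b i =>
      obtain ⟨h1, h2, h3⟩ := h
      refine ⟨by simpa [mapG] using h1, by simpa [mapG] using h2, ?_⟩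
      intro j hj
      have : σ⁻¹ j ≠ i := by
        intro hc; apply hj; rw [← hc]; simp
      simpa [mapG] using h3 _ this
  | eps =>
      simp only [GTrans] at h ⊢
      subst h; rfl

lemma R_map {T : Template AP} {n : ℕ} (σ : Equiv.Perm (Fin n))
    {g g' : GState T n} (h : ∃ a, GTrans T n a g g') :
    ∃ a, GTrans T n a (mapG T n σ g) (mapG T n σ g') := by
  obtain ⟨a, ha⟩ := h
  exact ⟨mapAct T n σ a, gtrans_map σ ha⟩

lemma mapG_init {T : Template AP} {n : ℕ} (σ : Equiv.Perm (Fin n)) :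
    mapG T n σ (GInit T n) = GInit T n := rfl

lemma reach_map {T : Template AP} {n : ℕ} (σ : Equiv.Perm (Fin n))
    {g : GState T n} (h : GReach T n g) : GReach T n (mapG T n σ g) := by
  induction h with
  | refl => exact Relation.ReflTransGen.refl
  | tail _ hstep ih => exact ih.tail (R_map σ hstep)

lemma eqv_map {T : Template AP} {n : ℕ} (σ : Equiv.Perm (Fin n))
    {i : Fin n} {g g' : GState T n}
    (h : (PIISModel T n).eqv i g g') :
    (PIISModel T n).eqv (σ i) (mapG T n σ g) (mapG T n σ g') := by
  obtain ⟨hr, he⟩ := h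
  exact ⟨reach_map σ hr, by simpa [mapG] using he⟩

mutual
theorem ssat_map {T : Template AP} {n : ℕ} (σ : Equiv.Perm (Fin n)) :
    ∀ (φ : SForm AP (Fin n)) (g : GState T n),
      ssat (PIISModel T n) φ g →
      ssat (PIISModel T n) (renameS (⇑σ) φ) (mapG T n σ g)
  | .atom p i, g, h => by simpa [ssat, renameS, PIISModel, mapG] using h
  | .natom p i, g, h => by simpa [ssat, renameS, PIISModel, mapG] using h
  | .sand φ ψ, g, h => ⟨ssat_map σ φ g h.1, ssat_map σ ψ g h.2⟩
  | .sor φ ψ, g, h =>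
      h.elim (fun h => Or.inl (ssat_map σ φ g h)) (fun h => Or.inr (ssat_map σ ψ g h))
  | .know i φ, g, h => by
      intro g'' hg''
      have h1 : (PIISModel T n).eqv i g (mapG T n σ⁻¹ g'') := by
        have := eqv_map σ⁻¹ hg''
        simpa [mapG_inv_mapG] using this
      have := ssat_map σ (φ) _ (h _ h1)
      rwa [mapG_mapG_inv σ g''] at this
  | .aall φ, g, h => by
      intro π hπ h0
      have hπ' : (PIISModel T n).ValidPath (fun j => mapG T n σ⁻¹ (π j)) :=
        fun j => R_map σ⁻¹ (hπ j)
      have h0' : (fun j => mapG T n σ⁻¹ (π j)) 0 = g := by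
        simp only [h0]; exact mapG_inv_mapG σ g
      have := psat_map σ φ _ (h _ hπ' h0')
      have he : (fun j => mapG T n σ (mapG T n σ⁻¹ (π j))) = π := by
        funext j; exact mapG_mapG_inv σ (π j)
      rwa [he] at this

theorem psat_map {T : Template AP} {n : ℕ} (σ : Equiv.Perm (Fin n)) :
    ∀ (φ : PForm AP (Fin n)) (π : ℕ → GState T n),
      psat (PIISModel T n) φ π →
      psat (PIISModel T n) (renameP (⇑σ) φ) (fun j => mapG T n σ (π j))
  | .ofState φ, π, h => ssat_map σ φ (π 0) h
  | .pand φ ψ, π, h => ⟨psat_map σ φ π h.1, psat_map σ ψ π h.2⟩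
  | .por φ ψ, π, h =>
      h.elim (fun h => Or.inl (psat_map σ φ π h)) (fun h => Or.inr (psat_map σ ψ π h))
  | .puntil φ ψ, π, h => by
      obtain ⟨i, hi, hj⟩ := h
      exact ⟨i, psat_map σ ψ _ hi, fun j hji => psat_map σ φ _ (hj j hji)⟩
  | .prelease φ ψ, π, h => by
      intro i hi
      refine psat_map σ ψ _ (h i ?_)
      intro j hji hc
      exact hi j hji (psat_map σ φ _ hc)
end

lemma PIISsat_map {T : Template AP} {n : ℕ} (σ : Equiv.Perm (Fin n))
    {φ : SForm AP (Fin n)} (h : PIISsat T n φ) : PIISsat T n (renameS (⇑σ) φ) := by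
  have := ssat_map σ φ (GInit T n) h
  simpa [PIISsat, PIISModel, mapG_init] using this

mutual
theorem renameS_comp {A B C : Type} (f : B → C) (g : A → B) :
    ∀ φ : SForm AP A, renameS f (renameS g φ) = renameS (f ∘ g) φ
  | .atom p i => rfl
  | .natom p i => rfl
  | .sand φ ψ => by simp [renameS, renameS_comp f g φ, renameS_comp f g ψ]
  | .sor φ ψ => by simp [renameS, renameS_comp f g φ, renameS_comp f g ψ]
  | .know i φ => by simp [renameS, renameS_comp f g φ]
  | .aall φ => by simp [renameS, renameP_comp f g φ]

theorem renameP_comp {A B C : Type} (f : B → C) (g : A → B) :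
    ∀ φ : PForm AP A, renameP f (renameP g φ) = renameP (f ∘ g) φ
  | .ofState φ => by simp [renameP, renameS_comp f g φ]
  | .pand φ ψ => by simp [renameP, renameP_comp f g φ, renameP_comp f g ψ]
  | .por φ ψ => by simp [renameP, renameP_comp f g φ, renameP_comp f g ψ]
  | .puntil φ ψ => by simp [renameP, renameP_comp f g φ, renameP_comp f g ψ]
  | .prelease φ ψ => by simp [renameP, renameP_comp f g φ, renameP_comp f g ψ]
end

end Aux

/-- Symmetry reduction: `T(n)` satisfies the conjunction of the
instantiations `φ(C)` over all `|J| = k`-tuples `C` of pairwise distinct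
agents iff `T(n)` satisfies the single instantiation `φ({1,…,k})` given by
the canonical inclusion of `{1,…,k}` into `{1,…,n}`. -/
theorem symmetry_reduction {AP : Type} (T : Template AP) (n k : ℕ)
    (hkn : k ≤ n) (φ : SForm AP (Fin k)) :
    (∀ C : Fin k ↪ Fin n, PIISsat T n (renameS (⇑C) φ)) ↔
      PIISsat T n (renameS (Fin.castLE hkn) φ) := by
  constructor
  · intro h
    have := h (Fin.castLEEmb hkn)
    simpa using this
  · intro h C
    classical
    -- build a permutation σ with σ ∘ castLE = C
    let e1 : Fin k ↪ Fin n := Fin.castLEEmb hkn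
    have he1 : ∀ x, e1 x = Fin.castLE hkn x := fun x => rfl
    let eq12 : {x : Fin n // x ∈ Set.range ⇑e1} ≃ {x : Fin n // x ∈ Set.range ⇑C} :=
      (Equiv.ofInjective _ e1.injective).symm.trans (Equiv.ofInjective _ C.injective)
    let σ : Equiv.Perm (Fin n) := eq12.extendSubtype
    have hσ : ∀ x : Fin k, σ (Fin.castLE hkn x) = C x := by
      intro x
      have hmem : Fin.castLE hkn x ∈ Set.range ⇑e1 := ⟨x, rfl⟩
      have h1 := eq12.extendSubtype_apply_of_mem (Fin.castLE hkn x) hmem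
      rw [show (σ : Equiv.Perm (Fin n)) = eq12.extendSubtype from rfl, h1]
      have h2 : (Equiv.ofInjective _ e1.injective).symm ⟨Fin.castLE hkn x, hmem⟩ = x := by
        rw [Equiv.symm_apply_eq]
        exact Subtype.ext rfl
      simp [eq12, h2]
    have := PIISsat_map σ h
    rw [renameS_comp] at this
    have hfun : (⇑σ ∘ Fin.castLE hkn) = ⇑C := funext hσ
    rwa [hfun] at this
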